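/- Let w_1,…,w_N and v_1,…,v_N be positive integers, and let W, K be positive integers. Form N + W new items: for 1 ≤ i ≤ N, item i has weight w_i and value (W+1)·v_i; for N+1 ≤ i ≤ N+W, item i has weight 1 and value 1 (so at least W of the new items have weight and value 1). Then there exists J ⊆ {1,…,N} with Σ_{i∈J} w_i ≤ W and Σ_{i∈J} v_i ≥ K if and only if there exists J' ⊆ {1,…,N+W} whose total weight (in the new instance) is at most W and whose total value (in the new instance) is at least (W+1)·K. -/
import Mathlib


/-- **Correctness of the reduction from Knapsack to Knapsack with unit-items.**
Given positive integer weights `w` and values `v` on `N` items and positive integers `W`, `K`,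
form `N + W` new items: for `i < N` item `i` has weight `w i` and value `(W+1) * v i`;
the remaining `W` items have weight `1` and value `1`.  There is a subset of the original
items of total weight at most `W` and total value at least `K` iff there is a subset of the
new items of total weight at most `W` and total value at least `(W+1) * K`. -/
theorem knapsack_unit_items_reduction
    (N W K : ℕ) (w v : Fin N → ℕ)
    (hw : ∀ i, 0 < w i) (hv : ∀ i, 0 < v i) (hW : 0 < W) (hK : 0 < K) :
    (∃ J : Finset (Fin N), (∑ i ∈ J, w i) ≤ W ∧ K ≤ ∑ i ∈ J, v i) ↔
      (∃ J' : Finset (Fin (N + W)),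
        (∑ i ∈ J', (if h : (i : ℕ) < N then w ⟨i, h⟩ else 1)) ≤ W ∧
        (W + 1) * K ≤ ∑ i ∈ J', (if h : (i : ℕ) < N then (W + 1) * v ⟨i, h⟩ else 1)) := by
  constructor
  · rintro ⟨J, hJw, hJv⟩
    refine ⟨J.map (Fin.castAddEmb W), ?_, ?_⟩
    · rw [Finset.sum_map]
      simp only [Fin.castAddEmb, Fin.coe_castAdd]
      calc ∑ i ∈ J, (if h : (i : ℕ) < N then w ⟨i, h⟩ else 1)
          = ∑ i ∈ J, w i := by
            apply Finset.sum_congr rfl; intro i _; rw [dif_pos i.isLt]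
        _ ≤ W := hJw
    · rw [Finset.sum_map]
      simp only [Fin.castAddEmb, Fin.coe_castAdd]
      calc (W+1) * K ≤ (W+1) * ∑ i ∈ J, v i := Nat.mul_le_mul_left _ hJv
        _ = ∑ i ∈ J, (W+1) * v i := by rw [Finset.mul_sum]
        _ = ∑ i ∈ J, (if h : (i : ℕ) < N then (W+1) * v ⟨i, h⟩ else 1) := by
            apply Finset.sum_congr rfl; intro i _; rw [dif_pos i.isLt]
  · rintro ⟨J', hJw, hJv⟩
    set J : Finset (Fin N) := Finset.univ.filter (fun i => Fin.castAdd W i ∈ J') with hJ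
    have key : ∀ f : Fin N → ℕ,
        ∑ j ∈ J'.filter (fun j : Fin (N+W) => (j : ℕ) < N),
            (if h : (j : ℕ) < N then f ⟨j, h⟩ else 1) = ∑ i ∈ J, f i := by
      intro f
      refine Finset.sum_bij' (fun j hj => (⟨(j : ℕ), (Finset.mem_filter.mp hj).2⟩ : Fin N))
        (fun i _ => Fin.castAdd W i) ?_ ?_ ?_ ?_ ?_
      · intro j hj
        simp only [hJ, Finset.mem_filter, Finset.mem_univ, true_and]
        have : Fin.castAdd W (⟨(j : ℕ), (Finset.mem_filter.mp hj).2⟩ : Fin N) = j := by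
          ext; simp
        rw [this]; exact (Finset.mem_filter.mp hj).1
      · intro i hi
        simp only [hJ, Finset.mem_filter, Finset.mem_univ, true_and] at hi
        exact Finset.mem_filter.mpr ⟨hi, by simp⟩
      · intro j hj; ext; simp
      · intro i hi; ext; simp
      · intro j hj
        rw [dif_pos (Finset.mem_filter.mp hj).2]
    have split : ∀ f : Fin N → ℕ,
        ∑ j ∈ J', (if h : (j : ℕ) < N then f ⟨j, h⟩ else 1)
          = ∑ i ∈ J, f i + (J'.filter (fun j : Fin (N+W) => ¬ (j : ℕ) < N)).card := by
      intro f
      rw [← Finset.sum_filter_add_sum_filter_not J' (fun j : Fin (N+W) => (j : ℕ) < N), key f]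
      congr 1
      rw [Finset.card_eq_sum_ones]
      apply Finset.sum_congr rfl
      intro j hj
      rw [dif_neg (Finset.mem_filter.mp hj).2]
    have hwsum : ∑ i ∈ J, w i ≤ W := by
      rw [split w] at hJw; omega
    refine ⟨J, hwsum, ?_⟩
    have hcard : (J'.filter (fun j : Fin (N+W) => ¬ (j : ℕ) < N)).card ≤ W := by
      rw [split w] at hJw; omega
    have hv' : (W + 1) * K ≤ (W + 1) * (∑ i ∈ J, v i) + W := by
      calc (W+1) * K ≤ ∑ j ∈ J', (if h : (j : ℕ) < N then (W+1) * v ⟨j, h⟩ else 1) := hJv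
        _ = ∑ i ∈ J, (W+1) * v i
              + (J'.filter (fun j : Fin (N+W) => ¬ (j : ℕ) < N)).card :=
            split (fun i => (W+1) * v i)
        _ = (W+1) * (∑ i ∈ J, v i)
              + (J'.filter (fun j : Fin (N+W) => ¬ (j : ℕ) < N)).card := by
            rw [Finset.mul_sum]
        _ ≤ (W+1) * (∑ i ∈ J, v i) + W := by omega
    by_contra hcon
    push_neg at hcon
    have : ∑ i ∈ J, v i + 1 ≤ K := hcon
    nlinarith [Nat.mul_le_mul_left (W+1) this]
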